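/- On (ℂ²)^{⊗4} with factors K1,K2,H1,H2, one has ∫_{SU(2)} |U⊗U⟩⟩⟨⟨U⊗U| dμ(U) = P₀ ⊗ P₀ + (1/3)·P₁ ⊗ P₁, where the first factor of each tensor product acts on K1⊗K2 and the second on H1⊗H2, P₀ is the rank-one orthogonal projector onto the singlet vector (|01⟩ − |10⟩)/√2 in ℂ²⊗ℂ², and P₁ = I₄ − P₀. -/

import Mathlib

open MeasureTheory Matrix ComplexOrder

noncomputable section

/-- `SU(2)`: the special unitary group of 2×2 complex matrices. -/
abbrev SU2 := Matrix.specialUnitaryGroup (Fin 2) ℂ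

instance : MeasurableSpace SU2 := borel SU2

abbrev Q := Fin 2

abbrev Mat2 := Matrix Q Q ℂ

/-- The rank-one outer product `|v⟩⟨v|`. -/
def outer {n : Type*} (v : n → ℂ) : Matrix n n ℂ :=
  fun a b => v a * (starRingEnd ℂ) (v b)

abbrev Idx2 := Q × Q

abbrev Mat4 := Matrix Idx2 Idx2 ℂ

/-- Index of the four-qubit space `K1⊗K2⊗H1⊗H2`. -/
abbrev Idx4 := Idx2 × Idx2

abbrev Mat16 := Matrix Idx4 Idx4 ℂ

/-- Kronecker product of two qubit operators. -/
def kron2 (A B : Mat2) : Mat4 := fun p q => A p.1 q.1 * B p.2 q.2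

/-- The unnormalized maximally entangled vector `|I⟩⟩ = Σ |ij⟩⊗|ij⟩`. -/
def ketI2 : Idx4 → ℂ := fun p => if p.1 = p.2 then 1 else 0

/-- `W ⊗ I₄`. -/
def WtI2 (W : Mat4) : Mat16 := fun p q => W p.1 q.1 * (if p.2 = q.2 then 1 else 0)

/-- `|W⟩⟩ = (W ⊗ I₄)|I⟩⟩`. -/
def ketW2 (W : Mat4) : Idx4 → ℂ := WtI2 W *ᵥ ketI2

/-- The normalized singlet vector `(|01⟩ − |10⟩)/√2`. -/
def singlet : Idx2 → ℂ := fun p =>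
  if p = (0, 1) then (Real.sqrt 2 : ℂ)⁻¹
  else if p = (1, 0) then -(Real.sqrt 2 : ℂ)⁻¹ else 0

/-- The rank-one orthogonal projector onto the singlet. -/
def P0 : Mat4 := outer singlet

/-- The projector complementary to the singlet projector. -/
def P1 : Mat4 := 1 - P0

/-- The Kronecker product of an operator on `K1⊗K2` with one on `H1⊗H2`. -/
def kron4 (A B : Mat4) : Mat16 := fun p q => A p.1 q.1 * B p.2 q.2

/- ### Auxiliary infrastructure -/

instance : BorelSpace SU2 := ⟨rfl⟩

instance : MeasurableMul SU2 :=
  ⟨fun c => (continuous_mul_left c).measurable, fun c => (continuous_mul_right c).measurable⟩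

lemma su2_star_mul_self (U : SU2) : star (U : Mat2) * (U : Mat2) = 1 :=
  Matrix.mem_unitaryGroup_iff'.mp (Matrix.mem_specialUnitaryGroup_iff.mp U.2).1

lemma su2_det (U : SU2) :
    (U : Mat2) 0 0 * (U : Mat2) 1 1 - (U : Mat2) 0 1 * (U : Mat2) 1 0 = 1 := by
  have h := (Matrix.mem_specialUnitaryGroup_iff.mp U.2).2
  rwa [Matrix.det_fin_two] at h

/-- signed indicator of the singlet vector (unnormalized). -/
def cI : Idx2 → ℂ := fun p => if p = (0,1) then 1 else if p = (1,0) then -1 else 0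

lemma cI00 : cI (0,0) = 0 := rfl
lemma cI01 : cI (0,1) = 1 := rfl
lemma cI10 : cI (1,0) = -1 := rfl
lemma cI11 : cI (1,1) = 0 := rfl

lemma cI_conj (p : Idx2) : (starRingEnd ℂ) (cI p) = cI p := by
  unfold cI; split_ifs <;> simp

lemma sum_idx2 (f : Idx2 → ℂ) : ∑ r : Idx2, f r = f (0,0) + f (0,1) + f (1,0) + f (1,1) := by
  rw [Fintype.sum_prod_type]; simp [Fin.sum_univ_two]; ring

lemma singlet_eq (p : Idx2) : singlet p = (Real.sqrt 2 : ℂ)⁻¹ * cI p := by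
  unfold singlet cI; split_ifs <;> ring

lemma P0_apply (p q : Idx2) : P0 p q = cI p * cI q / 2 := by
  show singlet p * (starRingEnd ℂ) (singlet q) = _
  rw [singlet_eq, singlet_eq, _root_.map_mul, cI_conj, map_inv₀, Complex.conj_ofReal]
  have hs : ((Real.sqrt 2 : ℝ) : ℂ) * ((Real.sqrt 2 : ℝ) : ℂ) = 2 := by
    rw [← Complex.ofReal_mul, Real.mul_self_sqrt (by norm_num)]
    norm_num
  have h2 : ((Real.sqrt 2 : ℝ) : ℂ)⁻¹ * ((Real.sqrt 2 : ℝ) : ℂ)⁻¹ = (2:ℂ)⁻¹ := by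
    rw [← mul_inv, hs]
  linear_combination (cI p * cI q) * h2

lemma ketW2_apply (W : Mat4) (p : Idx4) : ketW2 W p = W p.1 p.2 := by
  unfold ketW2 WtI2 ketI2
  simp only [Matrix.mulVec, dotProduct]
  rw [Fintype.sum_prod_type]
  simp only [mul_ite, ite_mul, mul_one, mul_zero, one_mul, zero_mul]
  rw [Finset.sum_comm]
  simp [Finset.sum_ite_eq, Finset.sum_ite_eq']

/- ### kron2 algebra -/

lemma kron2_mul (A B C D : Mat2) : kron2 A B * kron2 C D = kron2 (A * C) (B * D) := by
  ext p q
  rw [Matrix.mul_apply, sum_idx2]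
  simp only [kron2, Matrix.mul_apply, Fin.sum_univ_two]
  ring

lemma kron2_conjT (A B : Mat2) : (kron2 A B)ᴴ = kron2 Aᴴ Bᴴ := by
  ext p q
  simp [kron2, Matrix.conjTranspose_apply]

lemma kron2_one : kron2 1 1 = (1 : Mat4) := by
  ext p q
  simp only [kron2, Matrix.one_apply, Prod.ext_iff, ite_mul, one_mul, zero_mul]
  split_ifs with h1 h2 h3 <;> simp_all

/- ### the special unitaries used to pin down the commutant -/

def v1 : SU2 := ⟨!![Complex.I, 0; 0, -Complex.I], by
  rw [Matrix.mem_specialUnitaryGroup_iff]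
  refine ⟨Matrix.mem_unitaryGroup_iff.mpr ?_, by simp [Matrix.det_fin_two, Complex.ext_iff]⟩
  ext i j
  fin_cases i <;> fin_cases j <;>
    simp [Matrix.mul_apply, Fin.sum_univ_two, Matrix.star_eq_conjTranspose,
      Matrix.conjTranspose_apply, Complex.ext_iff]⟩

def v2 : SU2 := ⟨!![3/5, 4/5; -(4/5), 3/5], by
  rw [Matrix.mem_specialUnitaryGroup_iff]
  refine ⟨Matrix.mem_unitaryGroup_iff.mpr ?_, by rw [Matrix.det_fin_two]; norm_num⟩
  ext i j
  fin_cases i <;> fin_cases j <;>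
    simp [Matrix.mul_apply, Fin.sum_univ_two, Matrix.star_eq_conjTranspose,
      Matrix.conjTranspose_apply, map_div₀, map_ofNat] <;> norm_num⟩

def v3 : SU2 := ⟨!![3/5, 4/5*Complex.I; 4/5*Complex.I, 3/5], by
  rw [Matrix.mem_specialUnitaryGroup_iff]
  refine ⟨Matrix.mem_unitaryGroup_iff.mpr ?_, by
    rw [Matrix.det_fin_two]; simp [Complex.ext_iff]; norm_num⟩
  ext i j
  fin_cases i <;> fin_cases j <;>
    simp [Matrix.mul_apply, Fin.sum_univ_two, Matrix.star_eq_conjTranspose,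
      Matrix.conjTranspose_apply, map_div₀, map_ofNat, Complex.ext_iff] <;> norm_num⟩

/- ### continuity, integrability -/

lemma cont_entry (i j : Q) : Continuous (fun U : SU2 => (U : Mat2) i j) :=
  (continuous_apply j).comp ((continuous_apply i).comp continuous_subtype_val)

/-- The integrand of a single matrix entry of the averaged operator. -/
def fF (p a q b : Idx2) : SU2 → ℂ := fun U =>
  kron2 (U:Mat2) (U:Mat2) p a * (starRingEnd ℂ) (kron2 (U:Mat2) (U:Mat2) q b)

lemma contF (p a q b : Idx2) : Continuous (fF p a q b) := by
  unfold fF kron2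
  exact ((cont_entry p.1 a.1).mul (cont_entry p.2 a.2)).mul
    (Complex.continuous_conj.comp ((cont_entry q.1 b.1).mul (cont_entry q.2 b.2)))

lemma entry_bound (U : SU2) (i j : Q) : ‖(U : Mat2) i j‖ ≤ 1 := by
  have h := congrFun (congrFun (su2_star_mul_self U) j) j
  simp [Matrix.mul_apply, Fin.sum_univ_two, Matrix.star_eq_conjTranspose,
    Matrix.conjTranspose_apply, Matrix.one_apply] at h
  have h0 : ∀ k : Q, (starRingEnd ℂ) ((U : Mat2) k j) * (U : Mat2) k j
      = (Complex.normSq ((U : Mat2) k j) : ℂ) := by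
    intro k; rw [mul_comm, Complex.mul_conj]
  rw [h0 0, h0 1] at h
  have h2 : Complex.normSq ((U : Mat2) 0 j) + Complex.normSq ((U : Mat2) 1 j) = 1 := by
    exact_mod_cast h
  have hb : Complex.normSq ((U : Mat2) i j) ≤ 1 := by
    calc Complex.normSq ((U : Mat2) i j)
        ≤ ∑ k, Complex.normSq ((U : Mat2) k j) :=
          Finset.single_le_sum (f := fun k => Complex.normSq ((U : Mat2) k j))
            (fun k _ => Complex.normSq_nonneg _) (Finset.mem_univ i)
      _ = 1 := by rw [Fin.sum_univ_two]; exact h2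
  nlinarith [Complex.sq_norm ((U : Mat2) i j), norm_nonneg ((U : Mat2) i j)]

lemma normF_le (p a q b : Idx2) (U : SU2) : ‖fF p a q b U‖ ≤ 1 := by
  unfold fF kron2
  rw [norm_mul, RCLike.norm_conj, norm_mul, norm_mul]
  have h1 := entry_bound U p.1 a.1
  have h2 := entry_bound U p.2 a.2
  have h3 := entry_bound U q.1 b.1
  have h4 := entry_bound U q.2 b.2
  have m1 : ‖(U : Mat2) p.1 a.1‖ * ‖(U : Mat2) p.2 a.2‖ ≤ 1 :=
    mul_le_one₀ h1 (norm_nonneg _) h2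
  have m2 : ‖(U : Mat2) q.1 b.1‖ * ‖(U : Mat2) q.2 b.2‖ ≤ 1 :=
    mul_le_one₀ h3 (norm_nonneg _) h4
  exact mul_le_one₀ m1 (mul_nonneg (norm_nonneg _) (norm_nonneg _)) m2

variable (μ : Measure SU2) [IsProbabilityMeasure μ] [μ.IsMulLeftInvariant]

lemma integF (p a q b : Idx2) : Integrable (fF p a q b) μ := by
  refine Integrable.mono' (integrable_const (1:ℝ)) (contF p a q b).aestronglyMeasurable ?_
  filter_upwards with U
  exact normF_le p a q b U

lemma int_shift (f : SU2 → ℂ) (hf : AEStronglyMeasurable f μ) (v : SU2) :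
    ∫ U, f (v * U) ∂μ = ∫ U, f U ∂μ := by
  have hm : Measurable fun U : SU2 => v * U := (continuous_mul_left v).measurable
  conv_rhs => rw [← map_mul_left_eq_self μ v]
  rw [integral_map hm.aemeasurable]
  rwa [map_mul_left_eq_self μ v]

/-- The 4×4 matrix of second moments, for fixed column indices `a b`. -/
def Nmat (a b : Idx2) : Mat4 := fun p q => ∫ U : SU2, fF p a q b U ∂μ

lemma fF_shift (v U : SU2) (p a q b : Idx2) :
    fF p a q b (v * U) = ∑ r : Idx2, ∑ t : Idx2,
      (kron2 (v:Mat2) (v:Mat2) p r * (starRingEnd ℂ) (kron2 (v:Mat2) (v:Mat2) q t)) * fF r a t b U := by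
  have hw : ∀ (p a : Idx2), kron2 ((v*U : SU2):Mat2) ((v*U : SU2):Mat2) p a
      = ∑ r : Idx2, kron2 (v:Mat2) (v:Mat2) p r * kron2 (U:Mat2) (U:Mat2) r a := by
    intro p a
    rw [show ((v*U : SU2):Mat2) = (v:Mat2) * (U:Mat2) from rfl, ← kron2_mul, Matrix.mul_apply]
  show kron2 _ _ p a * (starRingEnd ℂ) (kron2 _ _ q b) = _
  rw [hw, hw, map_sum, Finset.sum_mul_sum]
  refine Finset.sum_congr rfl fun r _ => Finset.sum_congr rfl fun t _ => ?_
  simp only [fF, _root_.map_mul]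
  ring

lemma N_inv (v : SU2) (a b : Idx2) :
    Nmat μ a b = kron2 (v:Mat2) (v:Mat2) * Nmat μ a b * (kron2 (v:Mat2) (v:Mat2))ᴴ := by
  ext p q
  have lhs_eq : Nmat μ a b p q = ∑ r : Idx2, ∑ t : Idx2,
      (kron2 (v:Mat2) (v:Mat2) p r * (starRingEnd ℂ) (kron2 (v:Mat2) (v:Mat2) q t)) * Nmat μ a b r t := by
    have h1 : Nmat μ a b p q = ∫ U, fF p a q b (v * U) ∂μ :=
      (int_shift μ (fF p a q b) (contF p a q b).aestronglyMeasurable v).symm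
    rw [h1]
    have h2 : ∀ U, fF p a q b (v * U) = ∑ r : Idx2, ∑ t : Idx2,
        (kron2 (v:Mat2) (v:Mat2) p r * (starRingEnd ℂ) (kron2 (v:Mat2) (v:Mat2) q t)) * fF r a t b U :=
      fun U => fF_shift v U p a q b
    rw [integral_congr_ae (Filter.Eventually.of_forall h2)]
    rw [integral_finset_sum _ (fun r _ => integrable_finset_sum _
      (fun t _ => ((integF μ r a t b).const_mul _)))]
    refine Finset.sum_congr rfl fun r _ => ?_
    rw [integral_finset_sum _ (fun t _ => ((integF μ r a t b).const_mul _))]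
    refine Finset.sum_congr rfl fun t _ => ?_
    simp_rw [← smul_eq_mul, integral_smul]
    rfl
  rw [lhs_eq]
  simp only [Matrix.mul_apply, Matrix.conjTranspose_apply, sum_idx2, Complex.star_def]
  ring

lemma N_comm (v : SU2) (a b : Idx2) :
    kron2 (v:Mat2) (v:Mat2) * Nmat μ a b = Nmat μ a b * kron2 (v:Mat2) (v:Mat2) := by
  have h := N_inv μ v a b
  have hK : (kron2 (v:Mat2) (v:Mat2))ᴴ * (kron2 (v:Mat2) (v:Mat2)) = 1 := by
    rw [kron2_conjT, kron2_mul, ← Matrix.star_eq_conjTranspose, su2_star_mul_self, kron2_one]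
  nth_rewrite 2 [h]
  rw [mul_assoc (kron2 (v:Mat2) (v:Mat2) * Nmat μ a b), hK, mul_one]

/- ### pointwise identities from unitarity and the determinant -/

lemma trace_pointwise (U : SU2) (a b : Idx2) :
    ∑ p : Idx2, fF p a p b U = if a = b then 1 else 0 := by
  have h : ∀ (x y : Q), (starRingEnd ℂ) ((U:Mat2) 0 y) * (U:Mat2) 0 x
      + (starRingEnd ℂ) ((U:Mat2) 1 y) * (U:Mat2) 1 x = if y = x then 1 else 0 := by
    intro x y
    have hh := congrFun (congrFun (su2_star_mul_self U) y) x
    simpa [Matrix.mul_apply, Fin.sum_univ_two, Matrix.one_apply, Matrix.star_eq_conjTranspose,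
      Matrix.conjTranspose_apply] using hh
  rw [sum_idx2]
  have expand : fF (0,0) a (0,0) b U + fF (0,1) a (0,1) b U + fF (1,0) a (1,0) b U
      + fF (1,1) a (1,1) b U
      = ((starRingEnd ℂ) ((U:Mat2) 0 b.1) * (U:Mat2) 0 a.1
          + (starRingEnd ℂ) ((U:Mat2) 1 b.1) * (U:Mat2) 1 a.1)
      * ((starRingEnd ℂ) ((U:Mat2) 0 b.2) * (U:Mat2) 0 a.2
          + (starRingEnd ℂ) ((U:Mat2) 1 b.2) * (U:Mat2) 1 a.2) := by
    simp only [fF, kron2, _root_.map_mul]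
    ring
  rw [expand, h a.1 b.1, h a.2 b.2]
  clear expand h
  obtain ⟨a1,a2⟩ := a
  obtain ⟨b1,b2⟩ := b
  by_cases h1 : b1 = a1 <;> by_cases h2 : b2 = a2 <;>
    simp_all [Prod.ext_iff, eq_comm]

lemma singlet_pointwise (U : SU2) (a : Idx2) :
    ∑ p : Idx2, cI p * kron2 (U:Mat2) (U:Mat2) p a = cI a := by
  have hdet := su2_det U
  have hQ : ∀ i : Q, i = 0 ∨ i = 1 := by decide
  rw [sum_idx2, cI00, cI01, cI10, cI11]
  simp only [kron2]
  obtain ⟨a1, a2⟩ := a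
  rcases hQ a1 with rfl | rfl <;> rcases hQ a2 with rfl | rfl
  · rw [cI00]; ring
  · rw [cI01]; linear_combination hdet
  · rw [cI10]; linear_combination -hdet
  · rw [cI11]; ring

/- ### integrated identities -/

lemma Eq1sum (a b : Idx2) : ∑ p : Idx2, Nmat μ a b p p = if a = b then (1:ℂ) else 0 := by
  unfold Nmat
  rw [← integral_finset_sum _ (fun p _ => integF μ p a p b)]
  calc (∫ U, ∑ p : Idx2, fF p a p b U ∂μ)
      = ∫ _U : SU2, (if a = b then (1:ℂ) else 0) ∂μ :=
        integral_congr_ae (Filter.Eventually.of_forall fun U => trace_pointwise U a b)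
    _ = if a = b then (1:ℂ) else 0 := by simp

lemma Eq2sum (a b : Idx2) :
    ∑ p : Idx2, ∑ q : Idx2, cI p * cI q * Nmat μ a b p q = cI a * cI b := by
  have hpt : ∀ U : SU2, ∑ p : Idx2, ∑ q : Idx2, cI p * cI q * fF p a q b U = cI a * cI b := by
    intro U
    have ha := singlet_pointwise U a
    have hb : ∑ q : Idx2, cI q * (starRingEnd ℂ) (kron2 (U:Mat2) (U:Mat2) q b) = cI b := by
      have hcb := congrArg (starRingEnd ℂ) (singlet_pointwise U b)
      rw [map_sum] at hcb
      simp only [_root_.map_mul, cI_conj] at hcb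
      exact hcb
    calc ∑ p : Idx2, ∑ q : Idx2, cI p * cI q * fF p a q b U
        = (∑ p : Idx2, cI p * kron2 (U:Mat2) (U:Mat2) p a)
          * (∑ q : Idx2, cI q * (starRingEnd ℂ) (kron2 (U:Mat2) (U:Mat2) q b)) := by
          rw [Finset.sum_mul_sum]
          refine Finset.sum_congr rfl fun r _ => Finset.sum_congr rfl fun t _ => ?_
          simp only [fF]
          ring
      _ = cI a * cI b := by rw [ha, hb]
  have hint : ∀ p q : Idx2, Integrable (fun U => cI p * cI q * fF p a q b U) μ :=
    fun p q => (integF μ p a q b).const_mul _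
  unfold Nmat
  have swap : ∀ p q : Idx2, cI p * cI q * (∫ U, fF p a q b U ∂μ)
      = ∫ U, cI p * cI q * fF p a q b U ∂μ := by
    intro p q
    simp_rw [← smul_eq_mul, integral_smul]
  simp_rw [swap]
  have s1 : ∀ p : Idx2, ∑ q : Idx2, ∫ U, cI p * cI q * fF p a q b U ∂μ
      = ∫ U, ∑ q : Idx2, cI p * cI q * fF p a q b U ∂μ :=
    fun p => (integral_finset_sum _ (fun q _ => hint p q)).symm
  simp_rw [s1]
  rw [← integral_finset_sum _ (fun p _ => integrable_finset_sum _ (fun q _ => hint p q))]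
  rw [integral_congr_ae (Filter.Eventually.of_forall hpt)]
  simp

lemma comm_lit1 (a b : Idx2) :
    kron2 !![Complex.I,0;0,-Complex.I] !![Complex.I,0;0,-Complex.I] * Nmat μ a b
      = Nmat μ a b * kron2 !![Complex.I,0;0,-Complex.I] !![Complex.I,0;0,-Complex.I] :=
  N_comm μ v1 a b

lemma comm_lit2 (a b : Idx2) :
    kron2 !![3/5,4/5;-(4/5),3/5] !![3/5,4/5;-(4/5),3/5] * Nmat μ a b
      = Nmat μ a b * kron2 !![3/5,4/5;-(4/5),3/5] !![3/5,4/5;-(4/5),3/5] :=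
  N_comm μ v2 a b

lemma comm_lit3 (a b : Idx2) :
    kron2 !![3/5,4/5*Complex.I;4/5*Complex.I,3/5] !![3/5,4/5*Complex.I;4/5*Complex.I,3/5] * Nmat μ a b
      = Nmat μ a b * kron2 !![3/5,4/5*Complex.I;4/5*Complex.I,3/5] !![3/5,4/5*Complex.I;4/5*Complex.I,3/5] :=
  N_comm μ v3 a b

/- ### the commutant computation -/

set_option maxHeartbeats 3200000 in
lemma commutant (X : Mat4)
    (h1 : kron2 !![Complex.I,0;0,-Complex.I] !![Complex.I,0;0,-Complex.I] * X
        = X * kron2 !![Complex.I,0;0,-Complex.I] !![Complex.I,0;0,-Complex.I])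
    (h2 : kron2 !![3/5,4/5;-(4/5),3/5] !![3/5,4/5;-(4/5),3/5] * X
        = X * kron2 !![3/5,4/5;-(4/5),3/5] !![3/5,4/5;-(4/5),3/5])
    (h3 : kron2 !![3/5,4/5*Complex.I;4/5*Complex.I,3/5] !![3/5,4/5*Complex.I;4/5*Complex.I,3/5] * X
        = X * kron2 !![3/5,4/5*Complex.I;4/5*Complex.I,3/5] !![3/5,4/5*Complex.I;4/5*Complex.I,3/5]) :
    ∀ p q : Idx2, X p q = X (1,1) (1,1) * (if p = q then (1:ℂ) else 0)
      + (X (1,0) (1,0) - X (1,1) (1,1)) * (cI p * cI q) := by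
  have hI : Complex.I * Complex.I = -1 := Complex.I_mul_I
  have hQ : ∀ i : Q, i = 0 ∨ i = 1 := by decide
  intro p q
  obtain ⟨p1, p2⟩ := p
  obtain ⟨q1, q2⟩ := q
  rcases hQ p1 with rfl | rfl <;> rcases hQ p2 with rfl | rfl <;>
    rcases hQ q1 with rfl | rfl <;> rcases hQ q2 with rfl | rfl
  · -- entry (0,0)
    show X (0, 0) (0, 0) = X (1, 1) (1, 1) * 1 + (X (1, 0) (1, 0) - X (1, 1) (1, 1)) * (0 * 0)
    have e1 := congrFun (congrFun h1 (0, 0)) (0, 1)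
    have e2 := congrFun (congrFun h1 (0, 0)) (1, 0)
    have e3 := congrFun (congrFun h1 (0, 1)) (1, 1)
    have e4 := congrFun (congrFun h1 (1, 0)) (1, 1)
    have e5 := congrFun (congrFun h2 (0, 0)) (1, 1)
    rw [Matrix.mul_apply, Matrix.mul_apply, sum_idx2, sum_idx2] at e1 e2 e3 e4 e5
    simp only [kron2, Matrix.cons_val', Matrix.cons_val_zero, Matrix.cons_val_one,
      Matrix.head_cons, Matrix.head_fin_const, Matrix.empty_val', Matrix.cons_val_fin_one,
      Matrix.of_apply] at e1 e2 e3 e4 e5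
    linear_combination ((3/8 : ℂ)) * e1 + ((3/8 : ℂ)) * e2 + ((3/8 : ℂ)) * e3 + ((3/8 : ℂ)) * e4 + ((-25/16 : ℂ)) * e5 + ((-3/4 : ℂ)) * X (0, 0) (0, 1) * hI + ((-3/4 : ℂ)) * X (0, 0) (1, 0) * hI + ((3/4 : ℂ)) * X (0, 1) (1, 1) * hI + ((3/4 : ℂ)) * X (1, 0) (1, 1) * hI
  · -- entry (0,1)
    show X (0, 0) (0, 1) = X (1, 1) (1, 1) * 0 + (X (1, 0) (1, 0) - X (1, 1) (1, 1)) * (0 * 1)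
    have e1 := congrFun (congrFun h1 (0, 0)) (0, 1)
    rw [Matrix.mul_apply, Matrix.mul_apply, sum_idx2, sum_idx2] at e1
    simp only [kron2, Matrix.cons_val', Matrix.cons_val_zero, Matrix.cons_val_one,
      Matrix.head_cons, Matrix.head_fin_const, Matrix.empty_val', Matrix.cons_val_fin_one,
      Matrix.of_apply] at e1
    linear_combination ((-1/2 : ℂ)) * e1 + ((1 : ℂ)) * X (0, 0) (0, 1) * hI
  · -- entry (0,2)
    show X (0, 0) (1, 0) = X (1, 1) (1, 1) * 0 + (X (1, 0) (1, 0) - X (1, 1) (1, 1)) * (0 * (-1))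
    have e1 := congrFun (congrFun h1 (0, 0)) (1, 0)
    rw [Matrix.mul_apply, Matrix.mul_apply, sum_idx2, sum_idx2] at e1
    simp only [kron2, Matrix.cons_val', Matrix.cons_val_zero, Matrix.cons_val_one,
      Matrix.head_cons, Matrix.head_fin_const, Matrix.empty_val', Matrix.cons_val_fin_one,
      Matrix.of_apply] at e1
    linear_combination ((-1/2 : ℂ)) * e1 + ((1 : ℂ)) * X (0, 0) (1, 0) * hI
  · -- entry (0,3)
    show X (0, 0) (1, 1) = X (1, 1) (1, 1) * 0 + (X (1, 0) (1, 0) - X (1, 1) (1, 1)) * (0 * 0)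
    have e1 := congrFun (congrFun h1 (0, 0)) (1, 0)
    have e2 := congrFun (congrFun h1 (1, 1)) (0, 1)
    have e3 := congrFun (congrFun h2 (0, 0)) (0, 1)
    have e4 := congrFun (congrFun h3 (0, 0)) (0, 1)
    rw [Matrix.mul_apply, Matrix.mul_apply, sum_idx2, sum_idx2] at e1 e2 e3 e4
    simp only [kron2, Matrix.cons_val', Matrix.cons_val_zero, Matrix.cons_val_one,
      Matrix.head_cons, Matrix.head_fin_const, Matrix.empty_val', Matrix.cons_val_fin_one,
      Matrix.of_apply] at e1 e2 e3 e4
    linear_combination ((1/3 : ℂ) + (1/3 : ℂ) * Complex.I) * e1 + ((1/3 : ℂ) + (-1/3 : ℂ) * Complex.I) * e2 + ((25/24 : ℂ)) * e3 + ((25/24 : ℂ) * Complex.I) * e4 + ((1/2 : ℂ)) * X (0, 0) (0, 0) * hI + ((-2/3 : ℂ)) * X (0, 0) (1, 0) * hI + ((1/2 : ℂ)) * X (0, 0) (1, 1) * hI + ((-1/2 : ℂ)) * X (0, 1) (0, 1) * hI + ((-1/2 : ℂ)) * X (1, 0) (0, 1) * hI + ((-2/3 : ℂ)) * X (1, 1)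 (0, 1) * hI
  · -- entry (1,0)
    show X (0, 1) (0, 0) = X (1, 1) (1, 1) * 0 + (X (1, 0) (1, 0) - X (1, 1) (1, 1)) * (1 * 0)
    have e1 := congrFun (congrFun h1 (0, 1)) (0, 0)
    rw [Matrix.mul_apply, Matrix.mul_apply, sum_idx2, sum_idx2] at e1
    simp only [kron2, Matrix.cons_val', Matrix.cons_val_zero, Matrix.cons_val_one,
      Matrix.head_cons, Matrix.head_fin_const, Matrix.empty_val', Matrix.cons_val_fin_one,
      Matrix.of_apply] at e1
    linear_combination ((1/2 : ℂ)) * e1 + ((1 : ℂ)) * X (0, 1) (0, 0) * hI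
  · -- entry (1,1)
    show X (0, 1) (0, 1) = X (1, 1) (1, 1) * 1 + (X (1, 0) (1, 0) - X (1, 1) (1, 1)) * (1 * 1)
    have e1 := congrFun (congrFun h1 (0, 0)) (0, 1)
    have e2 := congrFun (congrFun h1 (0, 0)) (1, 0)
    have e3 := congrFun (congrFun h1 (0, 1)) (0, 0)
    have e4 := congrFun (congrFun h1 (0, 1)) (1, 1)
    have e5 := congrFun (congrFun h1 (1, 0)) (0, 0)
    have e6 := congrFun (congrFun h1 (1, 1)) (1, 0)
    have e7 := congrFun (congrFun h2 (0, 0)) (0, 0)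
    have e8 := congrFun (congrFun h2 (0, 0)) (1, 0)
    have e9 := congrFun (congrFun h2 (0, 1)) (0, 0)
    rw [Matrix.mul_apply, Matrix.mul_apply, sum_idx2, sum_idx2] at e1 e2 e3 e4 e5 e6 e7 e8 e9
    simp only [kron2, Matrix.cons_val', Matrix.cons_val_zero, Matrix.cons_val_one,
      Matrix.head_cons, Matrix.head_fin_const, Matrix.empty_val', Matrix.cons_val_fin_one,
      Matrix.of_apply] at e1 e2 e3 e4 e5 e6 e7 e8 e9
    linear_combination ((-25/24 : ℂ)) * e1 + ((-3/8 : ℂ)) * e2 + ((3/8 : ℂ)) * e3 + ((2/3 : ℂ)) * e4 + ((25/24 : ℂ)) * e5 + ((-2/3 : ℂ)) * e6 + ((-25/16 : ℂ)) * e7 + ((-25/12 : ℂ)) * e8 + ((25/12 : ℂ)) * e9 + ((25/12 : ℂ)) * X (0, 0) (0, 1) * hI + ((3/4 : ℂ)) * X (0, 0) (1, 0) * hI + ((3/4 : ℂ)) * X (0, 1) (0, 0) * hI + ((4/3 : ℂ)) * X (0, 1) (1, 1) * hI + ((25/12 : ℂ)) * X (1, 0) (0, 0) * hI + ((4/3 :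 ℂ)) * X (1, 1) (1, 0) * hI
  · -- entry (1,2)
    show X (0, 1) (1, 0) = X (1, 1) (1, 1) * 0 + (X (1, 0) (1, 0) - X (1, 1) (1, 1)) * (1 * (-1))
    have e1 := congrFun (congrFun h1 (0, 0)) (0, 1)
    have e2 := congrFun (congrFun h1 (0, 0)) (1, 0)
    have e3 := congrFun (congrFun h1 (0, 1)) (1, 1)
    have e4 := congrFun (congrFun h1 (1, 0)) (1, 1)
    have e5 := congrFun (congrFun h1 (1, 1)) (0, 1)
    have e6 := congrFun (congrFun h1 (1, 1)) (1, 0)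
    have e7 := congrFun (congrFun h2 (0, 0)) (0, 1)
    have e8 := congrFun (congrFun h2 (0, 0)) (1, 0)
    have e9 := congrFun (congrFun h2 (0, 0)) (1, 1)
    have e10 := congrFun (congrFun h3 (0, 0)) (0, 1)
    rw [Matrix.mul_apply, Matrix.mul_apply, sum_idx2, sum_idx2] at e1 e2 e3 e4 e5 e6 e7 e8 e9 e10
    simp only [kron2, Matrix.cons_val', Matrix.cons_val_zero, Matrix.cons_val_one,
      Matrix.head_cons, Matrix.head_fin_const, Matrix.empty_val', Matrix.cons_val_fin_one,
      Matrix.of_apply] at e1 e2 e3 e4 e5 e6 e7 e8 e9 e10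
    linear_combination ((25/24 : ℂ)) * e1 + ((1/24 : ℂ) + (-1/3 : ℂ) * Complex.I) * e2 + ((3/8 : ℂ)) * e3 + ((3/8 : ℂ)) * e4 + ((-1/3 : ℂ) + (1/3 : ℂ) * Complex.I) * e5 + ((2/3 : ℂ)) * e6 + ((-25/24 : ℂ)) * e7 + ((25/12 : ℂ)) * e8 + ((-25/16 : ℂ)) * e9 + ((-25/24 : ℂ) * Complex.I) * e10 + ((-1/2 : ℂ)) * X (0, 0) (0, 0) * hI + ((-25/12 : ℂ)) * X (0, 0) (0, 1) * hI + ((-1/12 : ℂ)) * X (0, 0) (1, 0) * hI + ((-1/2 : ℂ)) * X (0, 0) (1, 1) * hI + ((1/2 : ℂ)) * X (0, 1) (0, 1) * hI + ((3/4 : ℂ)) * X (0, 1) (1, 1) * hI + ((1/2 : ℂ)) * X (1, 0) (0, 1) * hI + ((3/4 : ℂ)) * X (1, 0) (1, 1) * hI + ((2/3 : ℂ)) * X (1, 1) (0, 1) * hI + ((-4/3 : ℂ)) * X (1, 1) (1, 0) * hI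
  · -- entry (1,3)
    show X (0, 1) (1, 1) = X (1, 1) (1, 1) * 0 + (X (1, 0) (1, 0) - X (1, 1) (1, 1)) * (1 * 0)
    have e1 := congrFun (congrFun h1 (0, 1)) (1, 1)
    rw [Matrix.mul_apply, Matrix.mul_apply, sum_idx2, sum_idx2] at e1
    simp only [kron2, Matrix.cons_val', Matrix.cons_val_zero, Matrix.cons_val_one,
      Matrix.head_cons, Matrix.head_fin_const, Matrix.empty_val', Matrix.cons_val_fin_one,
      Matrix.of_apply] at e1
    linear_combination ((1/2 : ℂ)) * e1 + ((1 : ℂ)) * X (0, 1) (1, 1) * hI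
  · -- entry (2,0)
    show X (1, 0) (0, 0) = X (1, 1) (1, 1) * 0 + (X (1, 0) (1, 0) - X (1, 1) (1, 1)) * ((-1) * 0)
    have e1 := congrFun (congrFun h1 (1, 0)) (0, 0)
    rw [Matrix.mul_apply, Matrix.mul_apply, sum_idx2, sum_idx2] at e1
    simp only [kron2, Matrix.cons_val', Matrix.cons_val_zero, Matrix.cons_val_one,
      Matrix.head_cons, Matrix.head_fin_const, Matrix.empty_val', Matrix.cons_val_fin_one,
      Matrix.of_apply] at e1
    linear_combination ((1/2 : ℂ)) * e1 + ((1 : ℂ)) * X (1, 0) (0, 0) * hI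
  · -- entry (2,1)
    show X (1, 0) (0, 1) = X (1, 1) (1, 1) * 0 + (X (1, 0) (1, 0) - X (1, 1) (1, 1)) * ((-1) * 1)
    have e1 := congrFun (congrFun h1 (0, 0)) (0, 1)
    have e2 := congrFun (congrFun h1 (0, 0)) (1, 0)
    have e3 := congrFun (congrFun h1 (0, 1)) (0, 0)
    have e4 := congrFun (congrFun h1 (0, 1)) (1, 1)
    have e5 := congrFun (congrFun h1 (1, 0)) (0, 0)
    have e6 := congrFun (congrFun h1 (1, 0)) (1, 1)
    have e7 := congrFun (congrFun h1 (1, 1)) (0, 1)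
    have e8 := congrFun (congrFun h1 (1, 1)) (1, 0)
    have e9 := congrFun (congrFun h2 (0, 0)) (0, 0)
    have e10 := congrFun (congrFun h2 (0, 0)) (0, 1)
    have e11 := congrFun (congrFun h2 (0, 0)) (1, 0)
    have e12 := congrFun (congrFun h2 (0, 0)) (1, 1)
    have e13 := congrFun (congrFun h2 (0, 1)) (0, 0)
    have e14 := congrFun (congrFun h3 (0, 0)) (0, 1)
    rw [Matrix.mul_apply, Matrix.mul_apply, sum_idx2, sum_idx2] at e1 e2 e3 e4 e5 e6 e7 e8 e9 e10 e11 e12 e13 e14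
    simp only [kron2, Matrix.cons_val', Matrix.cons_val_zero, Matrix.cons_val_one,
      Matrix.head_cons, Matrix.head_fin_const, Matrix.empty_val', Matrix.cons_val_fin_one,
      Matrix.of_apply] at e1 e2 e3 e4 e5 e6 e7 e8 e9 e10 e11 e12 e13 e14
    linear_combination ((17/12 : ℂ)) * e1 + ((13/12 : ℂ) + (-1/3 : ℂ) * Complex.I) * e2 + ((-3/8 : ℂ)) * e3 + ((-7/24 : ℂ)) * e4 + ((-25/24 : ℂ)) * e5 + ((3/8 : ℂ)) * e6 + ((1/3 : ℂ) + (1/3 : ℂ) * Complex.I) * e7 + ((2/3 : ℂ)) * e8 + ((25/16 : ℂ)) * e9 + ((25/24 : ℂ)) * e10 + ((25/12 : ℂ)) * e11 + ((-25/16 : ℂ)) * e12 + ((-25/12 : ℂ)) * e13 + ((-25/24 : ℂ) * Complex.I) * e14 + ((-1/2 : ℂ)) * X (0, 0) (0, 0) * hI + ((-17/6 : ℂ)) * X (0, 0) (0, 1) * hI + ((-13/6 : ℂ)) * X (0, 0) (1, 0) * hI + ((-1/2 : ℂ)) * X (0, 0) (1, 1) * hI + ((-3/4 : ℂ)) * X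 (0, 1) (0, 0) * hI + ((1/2 : ℂ)) * X (0, 1) (0, 1) * hI + ((-7/12 : ℂ)) * X (0, 1) (1, 1) * hI + ((-25/12 : ℂ)) * X (1, 0) (0, 0) * hI + ((1/2 : ℂ)) * X (1, 0) (0, 1) * hI + ((3/4 : ℂ)) * X (1, 0) (1, 1) * hI + ((-2/3 : ℂ)) * X (1, 1) (0, 1) * hI + ((-4/3 : ℂ)) * X (1, 1) (1, 0) * hI
  · -- entry (2,2)
    show X (1, 0) (1, 0) = X (1, 1) (1, 1) * 1 + (X (1, 0) (1, 0) - X (1, 1) (1, 1)) * ((-1) * (-1))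
    ring
  · -- entry (2,3)
    show X (1, 0) (1, 1) = X (1, 1) (1, 1) * 0 + (X (1, 0) (1, 0) - X (1, 1) (1, 1)) * ((-1) * 0)
    have e1 := congrFun (congrFun h1 (1, 0)) (1, 1)
    rw [Matrix.mul_apply, Matrix.mul_apply, sum_idx2, sum_idx2] at e1
    simp only [kron2, Matrix.cons_val', Matrix.cons_val_zero, Matrix.cons_val_one,
      Matrix.head_cons, Matrix.head_fin_const, Matrix.empty_val', Matrix.cons_val_fin_one,
      Matrix.of_apply] at e1
    linear_combination ((1/2 : ℂ)) * e1 + ((1 : ℂ)) * X (1, 0) (1, 1) * hI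
  · -- entry (3,0)
    show X (1, 1) (0, 0) = X (1, 1) (1, 1) * 0 + (X (1, 0) (1, 0) - X (1, 1) (1, 1)) * (0 * 0)
    have e1 := congrFun (congrFun h1 (0, 0)) (0, 1)
    have e2 := congrFun (congrFun h1 (0, 0)) (1, 0)
    have e3 := congrFun (congrFun h1 (0, 1)) (0, 0)
    have e4 := congrFun (congrFun h1 (1, 0)) (0, 0)
    have e5 := congrFun (congrFun h1 (1, 1)) (0, 1)
    have e6 := congrFun (congrFun h2 (0, 0)) (0, 0)
    have e7 := congrFun (congrFun h2 (0, 0)) (0, 1)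
    have e8 := congrFun (congrFun h3 (0, 0)) (0, 1)
    rw [Matrix.mul_apply, Matrix.mul_apply, sum_idx2, sum_idx2] at e1 e2 e3 e4 e5 e6 e7 e8
    simp only [kron2, Matrix.cons_val', Matrix.cons_val_zero, Matrix.cons_val_one,
      Matrix.head_cons, Matrix.head_fin_const, Matrix.empty_val', Matrix.cons_val_fin_one,
      Matrix.of_apply] at e1 e2 e3 e4 e5 e6 e7 e8
    linear_combination ((3/8 : ℂ)) * e1 + ((17/24 : ℂ) + (1/3 : ℂ) * Complex.I) * e2 + ((-3/8 : ℂ)) * e3 + ((-3/8 : ℂ)) * e4 + ((1/3 : ℂ) + (-1/3 : ℂ) * Complex.I) * e5 + ((25/16 : ℂ)) * e6 + ((25/24 : ℂ)) * e7 + ((25/24 : ℂ) * Complex.I) * e8 + ((1/2 : ℂ)) * X (0, 0) (0, 0) * hI + ((-3/4 : ℂ)) * X (0, 0) (0, 1) * hI + ((-17/12 : ℂ)) * X (0, 0) (1, 0) * hI + ((1/2 : ℂ)) * X (0, 0) (1, 1) * hI + ((-3/4 : ℂ)) * X (0, 1) (0, 0) * hI + ((-1/2 : ℂ)) * X (0,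 1) (0, 1) * hI + ((-3/4 : ℂ)) * X (1, 0) (0, 0) * hI + ((-1/2 : ℂ)) * X (1, 0) (0, 1) * hI + ((-2/3 : ℂ)) * X (1, 1) (0, 1) * hI
  · -- entry (3,1)
    show X (1, 1) (0, 1) = X (1, 1) (1, 1) * 0 + (X (1, 0) (1, 0) - X (1, 1) (1, 1)) * (0 * 1)
    have e1 := congrFun (congrFun h1 (1, 1)) (0, 1)
    rw [Matrix.mul_apply, Matrix.mul_apply, sum_idx2, sum_idx2] at e1
    simp only [kron2, Matrix.cons_val', Matrix.cons_val_zero, Matrix.cons_val_one,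
      Matrix.head_cons, Matrix.head_fin_const, Matrix.empty_val', Matrix.cons_val_fin_one,
      Matrix.of_apply] at e1
    linear_combination ((-1/2 : ℂ)) * e1 + ((1 : ℂ)) * X (1, 1) (0, 1) * hI
  · -- entry (3,2)
    show X (1, 1) (1, 0) = X (1, 1) (1, 1) * 0 + (X (1, 0) (1, 0) - X (1, 1) (1, 1)) * (0 * (-1))
    have e1 := congrFun (congrFun h1 (1, 1)) (1, 0)
    rw [Matrix.mul_apply, Matrix.mul_apply, sum_idx2, sum_idx2] at e1
    simp only [kron2, Matrix.cons_val', Matrix.cons_val_zero, Matrix.cons_val_one,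
      Matrix.head_cons, Matrix.head_fin_const, Matrix.empty_val', Matrix.cons_val_fin_one,
      Matrix.of_apply] at e1
    linear_combination ((-1/2 : ℂ)) * e1 + ((1 : ℂ)) * X (1, 1) (1, 0) * hI
  · -- entry (3,3)
    show X (1, 1) (1, 1) = X (1, 1) (1, 1) * 1 + (X (1, 0) (1, 0) - X (1, 1) (1, 1)) * (0 * 0)
    ring


/- ### main theorem -/

/-- `∫ |U⊗U⟩⟩⟨⟨U⊗U| dμ(U) = P₀⊗P₀ + (1/3)·P₁⊗P₁`. -/
theorem average_UU (μ : Measure SU2) [IsProbabilityMeasure μ] [μ.IsMulLeftInvariant] :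
    (fun a b => ∫ U : SU2, outer (ketW2 (kron2 U U)) a b ∂μ : Mat16)
      = kron4 P0 P0 + (1/3 : ℂ) • kron4 P1 P1 := by
  funext x y
  obtain ⟨p, a⟩ := x
  obtain ⟨q, b⟩ := y
  have hL : (∫ U : SU2, outer (ketW2 (kron2 (U:Mat2) (U:Mat2))) (p,a) (q,b) ∂μ)
      = Nmat μ a b p q := by
    refine integral_congr_ae (Filter.Eventually.of_forall fun U => ?_)
    show ketW2 (kron2 (U:Mat2) (U:Mat2)) (p,a) * (starRingEnd ℂ) (ketW2 (kron2 (U:Mat2) (U:Mat2)) (q,b)) = _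
    rw [ketW2_apply, ketW2_apply]
    rfl
  show (∫ U : SU2, outer (ketW2 (kron2 (U:Mat2) (U:Mat2))) (p,a) (q,b) ∂μ) = _
  rw [hL]
  have key := commutant (Nmat μ a b) (comm_lit1 μ a b) (comm_lit2 μ a b) (comm_lit3 μ a b)
  have k00 : Nmat μ a b (0,0) (0,0) = Nmat μ a b (1,1) (1,1) * 1
      + (Nmat μ a b (1,0) (1,0) - Nmat μ a b (1,1) (1,1)) * (0 * 0) := key (0,0) (0,0)
  have k0101 : Nmat μ a b (0,1) (0,1) = Nmat μ a b (1,1) (1,1) * 1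
      + (Nmat μ a b (1,0) (1,0) - Nmat μ a b (1,1) (1,1)) * (1 * 1) := key (0,1) (0,1)
  have k0110 : Nmat μ a b (0,1) (1,0) = Nmat μ a b (1,1) (1,1) * 0
      + (Nmat μ a b (1,0) (1,0) - Nmat μ a b (1,1) (1,1)) * (1 * (-1)) := key (0,1) (1,0)
  have k1001 : Nmat μ a b (1,0) (0,1) = Nmat μ a b (1,1) (1,1) * 0
      + (Nmat μ a b (1,0) (1,0) - Nmat μ a b (1,1) (1,1)) * ((-1) * 1) := key (1,0) (0,1)
  have hE1 : Nmat μ a b (0,0) (0,0) + Nmat μ a b (0,1) (0,1) + Nmat μ a b (1,0) (1,0)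
      + Nmat μ a b (1,1) (1,1) = if a = b then (1:ℂ) else 0 := by
    have h := Eq1sum μ a b
    rwa [sum_idx2] at h
  have hE2 : Nmat μ a b (0,1) (0,1) - Nmat μ a b (0,1) (1,0) - Nmat μ a b (1,0) (0,1)
      + Nmat μ a b (1,0) (1,0) = cI a * cI b := by
    have h := Eq2sum μ a b
    simp only [sum_idx2, cI00, cI01, cI10, cI11] at h
    linear_combination h
  have hu : 2 * Nmat μ a b (1,1) (1,1) + 2 * Nmat μ a b (1,0) (1,0)
      = if a = b then (1:ℂ) else 0 := by
    linear_combination hE1 - k00 - k0101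
  have hv : 4 * Nmat μ a b (1,0) (1,0) - 2 * Nmat μ a b (1,1) (1,1) = cI a * cI b := by
    linear_combination hE2 - k0101 + k0110 + k1001
  show Nmat μ a b p q = kron4 P0 P0 ((p,a)) ((q,b)) + ((1/3 : ℂ) • kron4 P1 P1) ((p,a)) ((q,b))
  have hP1 : ∀ (r t : Idx2), P1 r t = (if r = t then (1:ℂ) else 0) - cI r * cI t / 2 := by
    intro r t
    show (1 : Mat4) r t - P0 r t = _
    rw [Matrix.one_apply, P0_apply]
  show Nmat μ a b p q = P0 p q * P0 a b + (1/3 : ℂ) * (P1 p q * P1 a b)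
  rw [P0_apply, P0_apply, hP1, hP1]
  linear_combination key p q
    + ((2*(if p = q then (1:ℂ) else 0) - cI p * cI q)/6) * hu
    + ((2*(cI p * cI q) - (if p = q then (1:ℂ) else 0))/6) * hv

end
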